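/- Let n ≥ 3 and 2 ≤ k ≤ n − 1. For every λ ∈ Γ_k one has σ_k(λ) σ_{k−1}(λ) ≥ σ_{k−2}(λ) σ_{k+1}(λ) (with the convention σ₀ = 1). -/

import Mathlib

open scoped BigOperators

/-- The `k`-th elementary symmetric polynomial `σ_k(λ)` of `λ ∈ ℝⁿ`, indexed by `k : ℤ`,
with the conventions `σ₀ = 1` and `σ_k = 0` for `k < 0` or `k > n`. -/
noncomputable def esymmZ (n : ℕ) (k : ℤ) (lam : Fin n → ℝ) : ℝ :=
  if k < 0 then 0 else ∑ s ∈ Finset.univ.powersetCard k.toNat, ∏ i ∈ s, lam i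

/-- `S_k(λ) := σ_k(λ) + α σ_{k-1}(λ)`. -/
noncomputable def SZ (n : ℕ) (α : ℝ) (k : ℤ) (lam : Fin n → ℝ) : ℝ :=
  esymmZ n k lam + α * esymmZ n (k - 1) lam

/-- The Garding cone `Γ_m = {λ ∈ ℝⁿ : σ_j(λ) > 0 for j = 1,…,m}` (so `Γ₀ = ℝⁿ`). -/
def Gamma (n : ℕ) (m : ℕ) : Set (Fin n → ℝ) :=
  {lam | ∀ j : ℕ, 1 ≤ j → j ≤ m → 0 < esymmZ n j lam}

/-- `Γ̃_k := Γ_{k-1} ∩ {λ : S_k(λ) > 0}`. -/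
def GammaTilde (n : ℕ) (α : ℝ) (k : ℕ) : Set (Fin n → ℝ) :=
  Gamma n (k - 1) ∩ {lam | 0 < SZ n α k lam}

/-- `σ_k(λ|i)`: the `k`-th elementary symmetric polynomial of the vector obtained
from `λ` by deleting the entry `λ_i`. -/
noncomputable def esymmDel (n : ℕ) (k : ℤ) (lam : Fin n → ℝ) (i : Fin n) : ℝ :=
  if k < 0 then 0 else
    ∑ s ∈ (Finset.univ.erase i).powersetCard k.toNat, ∏ j ∈ s, lam j

/-- `S_k(λ|i) := σ_k(λ|i) + α σ_{k-1}(λ|i)`.  In particular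
`S_k^{ii}(λ) = ∂S_k/∂λ_i = S_{k-1}(λ|i) = SDel n α (k-1) lam i`. -/
noncomputable def SDel (n : ℕ) (α : ℝ) (k : ℤ) (lam : Fin n → ℝ) (i : Fin n) : ℝ :=
  esymmDel n k lam i + α * esymmDel n (k - 1) lam i

/-- `σ_k(λ|pq)`: the `k`-th elementary symmetric polynomial of the vector obtained
from `λ` by deleting the entries `λ_p` and `λ_q`. -/
noncomputable def esymmDel2 (n : ℕ) (k : ℤ) (lam : Fin n → ℝ) (p q : Fin n) : ℝ :=
  if k < 0 then 0 else
    ∑ s ∈ ((Finset.univ.erase p).erase q).powersetCard k.toNat, ∏ l ∈ s, lam l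

/-- `S_k^{pp,qq}(λ) = ∂²S_k/∂λ_p∂λ_q`, which equals
`σ_{k-2}(λ|pq) + α σ_{k-3}(λ|pq)` for `p ≠ q`, and `0` for `p = q`. -/
noncomputable def Spq (n : ℕ) (α : ℝ) (k : ℤ) (lam : Fin n → ℝ) (p q : Fin n) : ℝ :=
  if p = q then 0 else esymmDel2 n (k - 2) lam p q + α * esymmDel2 n (k - 3) lam p q

noncomputable def Esym (n : ℕ) (lam : Fin n → ℝ) (m : ℕ) : ℝ :=
  ∑ s ∈ Finset.univ.powersetCard m, ∏ i ∈ s, lam i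

lemma esymmZ_natCast (n : ℕ) (m : ℕ) (lam : Fin n → ℝ) :
    esymmZ n (m : ℤ) lam = Esym n lam m := by
  simp [esymmZ, Esym]

lemma Esym_zero (n : ℕ) (lam : Fin n → ℝ) : Esym n lam 0 = 1 := by
  simp [Esym]

section NewtonIneq
open Polynomial

lemma splits_derivative (p : ℝ[X]) (hp : p.Splits) :
    (derivative p).Splits := by
  rcases eq_or_ne (derivative p) 0 with h | h
  · rw [h]; exact Splits.zero
  have hnd : p.natDegree ≠ 0 := by
    intro h0
    exact h (by rw [eq_C_of_natDegree_eq_zero h0]; simp)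
  have h1 : Multiset.card p.roots = p.natDegree := splits_iff_card_roots.1 hp
  have h2 := card_roots_le_derivative p
  have h3 : Multiset.card (derivative p).roots ≤ (derivative p).natDegree :=
    card_roots' _
  have h4 : (derivative p).natDegree < p.natDegree := natDegree_derivative_lt hnd
  exact splits_iff_card_roots.2 (by omega)

lemma splits_iterate_derivative (p : ℝ[X]) (hp : p.Splits) (t : ℕ) :
    (derivative^[t] p).Splits := by
  induction t with
  | zero => exact hp
  | succ t ih => rw [Function.iterate_succ_apply']; exact splits_derivative _ ih

lemma splits_reverse (p : ℝ[X]) (hp : p.Splits) :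
    p.reverse.Splits := by
  have hrepr := hp.eq_prod_roots
  rw [hrepr, reverse_mul_of_domain]
  refine Splits.mul (Splits.of_natDegree_le_one ?_) ?_
  · exact le_trans (reverse_natDegree_le _) (by simp)
  · generalize p.roots = s
    induction s using Multiset.induction with
    | empty => simp only [Multiset.map_zero, Multiset.prod_zero]
               exact Splits.of_natDegree_le_one (le_trans (reverse_natDegree_le _) (by simp))
    | cons a s ih =>
        rw [Multiset.map_cons, Multiset.prod_cons, reverse_mul_of_domain]
        refine Splits.mul (Splits.of_natDegree_le_one ?_) ih
        exact le_trans (reverse_natDegree_le _) (by simp [natDegree_X_sub_C])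

lemma discrim_le (S : ℝ[X]) (hs : S.Splits) (hdeg : S.natDegree ≤ 2) :
    4 * (S.coeff 2 * S.coeff 0) ≤ S.coeff 1 ^ 2 := by
  rcases eq_or_ne (S.coeff 2) 0 with h2 | h2
  · rw [h2]; nlinarith [sq_nonneg (S.coeff 1)]
  have hdeg' : S.natDegree = 2 := le_antisymm hdeg (le_natDegree_of_ne_zero h2)
  have hS0 : S ≠ 0 := fun h => h2 (by simp [h])
  have hdegne : S.degree ≠ 0 := by
    rw [degree_eq_natDegree hS0, hdeg']
    exact_mod_cast (by norm_num : ((2:ℕ) : WithBot ℤ) ≠ 0)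
  obtain ⟨x, hx⟩ := hs.exists_eval_eq_zero hdegne
  have heval : S.coeff 0 + S.coeff 1 * x + S.coeff 2 * x ^ 2 = 0 := by
    have h : S.eval x = 0 := hx
    rw [eval_eq_sum_range, hdeg'] at h
    simp only [Finset.sum_range_succ, Finset.sum_range_zero] at h
    nlinarith [h]
  have key : S.coeff 1 ^ 2 - 4 * (S.coeff 2 * S.coeff 0) =
      (2 * S.coeff 2 * x + S.coeff 1) ^ 2 -
        4 * S.coeff 2 * (S.coeff 0 + S.coeff 1 * x + S.coeff 2 * x ^ 2) := by ring
  rw [heval, mul_zero, sub_zero] at key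
  nlinarith [sq_nonneg (2 * S.coeff 2 * x + S.coeff 1), key]

lemma desc_f1 (i : ℕ) : (i+1).descFactorial i = (i+1).factorial := by
  have h := Nat.descFactorial_self (i+1)
  rwa [Nat.descFactorial_succ, Nat.add_sub_cancel_left, one_mul] at h

lemma desc_f2 (i : ℕ) : 2 * (i+2).descFactorial i = (i+2).factorial := by
  have h := Nat.descFactorial_self (i+2)
  rw [Nat.descFactorial_succ, Nat.descFactorial_succ] at h
  have e1 : i + 2 - (i+1) = 1 := by omega
  have e2 : i + 2 - i = 2 := by omega
  rw [e1, e2, one_mul] at h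
  omega

lemma dF_pos {k n : ℕ} (h : k ≤ n) : 0 < n.descFactorial k :=
  Nat.pos_of_ne_zero fun h0 => absurd (Nat.descFactorial_eq_zero_iff_lt.1 h0) (by omega)

lemma nid (i m : ℕ) :
    4 * ((i+2).descFactorial i * m.descFactorial m) *
        (i.descFactorial i * (m+2).descFactorial m) * ((i+1)*(m+1)) =
      ((i+1).descFactorial i * (m+1).descFactorial m)^2 * ((i+2)*(m+2)) := by
  have fi := desc_f2 i
  have fm := desc_f2 m
  have h : 4 * ((i+2).descFactorial i * m.descFactorial m) *
      (i.descFactorial i * (m+2).descFactorial m) * ((i+1)*(m+1)) =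
      (2*(i+2).descFactorial i) * (2*(m+2).descFactorial m) *
        (m.descFactorial m * i.descFactorial i * ((i+1)*(m+1))) := by ring
  rw [h, fi, fm, desc_f1, desc_f1, Nat.descFactorial_self i, Nat.descFactorial_self m,
    Nat.factorial_succ (i+1), Nat.factorial_succ i,
    Nat.factorial_succ (m+1), Nat.factorial_succ m]
  ring

lemma newton_aux (n j : ℕ) (hj : 1 ≤ j) (hjn : j + 1 ≤ n) (lam : Fin n → ℝ) :
    (((j+1) * (n-j+1) : ℕ) : ℝ) * (Esym n lam (j-1) * Esym n lam (j+1)) ≤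
      ((j * (n-j) : ℕ) : ℝ) * Esym n lam j ^ 2 := by
  obtain ⟨i, rfl⟩ : ∃ i, j = i + 1 := ⟨j - 1, by omega⟩
  obtain ⟨m, rfl⟩ : ∃ m, n = i + m + 2 := ⟨n - (i + 2), by omega⟩
  simp only [show i+1-1 = i from by omega, show i+1+1 = i+2 from by omega,
    show i+m+2-(i+1)+1 = m+2 from by omega, show i+m+2-(i+1) = m+1 from by omega]
  set P : ℝ[X] := ∏ a : Fin (i+m+2), (X + C (lam a)) with hPdef
  have hPm : P.Monic := monic_prod_of_monic _ _ fun _ _ => monic_X_add_C _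
  have hPdeg : P.natDegree = (i+m+2) := by
    rw [hPdef, natDegree_prod_of_monic _ _ fun _ _ => monic_X_add_C _]
    simp [natDegree_X_add_C]
  have hPsp : P.Splits :=
    Splits.prod fun _ _ => Splits.of_natDegree_le_one (by simp [natDegree_X_add_C])
  have hPco : ∀ t, t ≤ (i+m+2) → P.coeff t = Esym (i+m+2) lam ((i+m+2) - t) := by
    intro t ht
    rw [hPdef, Finset.prod_X_add_C_coeff _ _ (by simpa using ht)]
    simp [Esym]
  have hPtop : P.coeff (i+m+2) = 1 := by
    have := hPm.coeff_natDegree; rwa [hPdeg] at this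
  set Q := derivative^[m] P with hQdef
  have hQsp := splits_iterate_derivative P hPsp m
  have hQco : ∀ t, Q.coeff t = (t+m).descFactorial m • P.coeff (t+m) := fun t =>
    coeff_iterate_derivative P t
  have hQdeg : Q.natDegree = i+2 := by
    refine le_antisymm ((natDegree_iterate_derivative P m).trans (by rw [hPdeg]; omega))
      (le_natDegree_of_ne_zero ?_)
    rw [hQco, show i+2+m = (i+m+2) from by omega, hPtop]
    simp only [nsmul_eq_mul, mul_one, Ne, Nat.cast_eq_zero]
    exact (dF_pos (by omega)).ne'
  set R := Q.reverse with hRdef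
  have hRsp := splits_reverse Q hQsp
  have hRco : ∀ t, t ≤ i+2 → R.coeff t = Q.coeff (i+2-t) := by
    intro t ht
    rw [hRdef, coeff_reverse, hQdeg, revAt_le ht]
  set S := derivative^[i] R with hSdef
  have hSsp := splits_iterate_derivative R hRsp i
  have hSdeg : S.natDegree ≤ 2 := by
    have h1 : S.natDegree ≤ R.natDegree - i := natDegree_iterate_derivative R i
    have h2 : R.natDegree ≤ Q.natDegree := reverse_natDegree_le Q
    rw [hQdeg] at h2
    omega
  have hSco : ∀ t, S.coeff t = (t+i).descFactorial i • R.coeff (t+i) := fun t =>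
    coeff_iterate_derivative R t
  have hc2 : S.coeff 2 = ((i+2).descFactorial i : ℝ) *
      ((m.descFactorial m : ℝ) * Esym (i+m+2) lam (i+2)) := by
    rw [hSco, hRco (2+i) (by omega), show i+2-(2+i) = 0 from by omega, hQco,
      show (0:ℕ)+m = m from by omega, hPco m (by omega), show (i+m+2) - m = i+2 from by omega]
    simp [nsmul_eq_mul, show 2+i = i+2 from by omega]
  have hc1 : S.coeff 1 = ((i+1).descFactorial i : ℝ) *
      (((m+1).descFactorial m : ℝ) * Esym (i+m+2) lam (i+1)) := by
    rw [hSco, hRco (1+i) (by omega), show i+2-(1+i) = 1 from by omega, hQco,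
      show (1:ℕ)+m = m+1 from by omega, hPco (m+1) (by omega),
      show (i+m+2) - (m+1) = i+1 from by omega]
    simp [nsmul_eq_mul, show 1+i = i+1 from by omega]
  have hc0 : S.coeff 0 = ((i).descFactorial i : ℝ) *
      (((m+2).descFactorial m : ℝ) * Esym (i+m+2) lam i) := by
    rw [hSco, hRco (0+i) (by omega), show i+2-(0+i) = 2 from by omega, hQco,
      show (2:ℕ)+m = m+2 from by omega, hPco (m+2) (by omega),
      show (i+m+2) - (m+2) = i from by omega]
    simp [nsmul_eq_mul, show 0+i = i from by omega]
  have hd := discrim_le S hSsp hSdeg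
  rw [hc2, hc1, hc0] at hd
  have hnid := nid i m
  have hnidR : (4:ℝ) * (((i+2).descFactorial i : ℝ) * (m.descFactorial m : ℝ)) *
      (((i).descFactorial i : ℝ) * ((m+2).descFactorial m : ℝ)) * (((i+1):ℝ)*((m+1):ℝ)) =
      ((((i+1).descFactorial i : ℝ)) * (((m+1).descFactorial m : ℝ)))^2 *
        (((i+2):ℝ)*((m+2):ℝ)) := by exact_mod_cast congrArg (fun x : ℕ => (x:ℝ)) hnid
  set A := Esym (i+m+2) lam (i+2)
  set B := Esym (i+m+2) lam (i+1)
  set Cc := Esym (i+m+2) lam i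
  set a1 := ((i+2).descFactorial i : ℝ)
  set a2 := ((m).descFactorial m : ℝ)
  set b1 := ((i+1).descFactorial i : ℝ)
  set b2 := (((m+1)).descFactorial m : ℝ)
  set c1 := ((i).descFactorial i : ℝ)
  set c2 := (((m+2)).descFactorial m : ℝ)
  have hb1 : 0 < b1 :=
    show (0:ℝ) < (((i+1).descFactorial i : ℕ) : ℝ) by
      exact_mod_cast dF_pos (show i ≤ i + 1 by omega)
  have hb2 : 0 < b2 :=
    show (0:ℝ) < (((m+1).descFactorial m : ℕ) : ℝ) by
      exact_mod_cast dF_pos (show m ≤ m + 1 by omega)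
  have hbb : (0:ℝ) < (b1 * b2)^2 := by positivity
  refine le_of_mul_le_mul_right ?_ hbb
  calc (((i+2) * (m+2) : ℕ) : ℝ) * (Cc * A) * (b1*b2)^2
      = (((i+1) * (m+1) : ℕ) : ℝ) * (4 * ((a1 * (a2 * A)) * (c1 * (c2 * Cc)))) := by
        push_cast
        linear_combination (-(A * Cc)) * hnidR
    _ ≤ (((i+1) * (m+1) : ℕ) : ℝ) * (b1 * (b2 * B))^2 := by
        refine mul_le_mul_of_nonneg_left hd ?_
        positivity
    _ = (((i+1) * (m+1) : ℕ) : ℝ) * B^2 * (b1*b2)^2 := by ring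

lemma newton_weak (n j : ℕ) (hj : 1 ≤ j) (hjn : j + 1 ≤ n) (lam : Fin n → ℝ) :
    Esym n lam (j-1) * Esym n lam (j+1) ≤ Esym n lam j ^ 2 := by
  rcases le_or_gt (Esym n lam (j-1) * Esym n lam (j+1)) 0 with h | h
  · exact h.trans (sq_nonneg _)
  · have h1 := newton_aux n j hj hjn lam
    have c2 : (0:ℝ) < (((j+1) * (n-j+1) : ℕ) : ℝ) := by
      have : 0 < (j+1) * (n-j+1) := Nat.mul_pos (by omega) (by omega)
      exact_mod_cast this
    have c1 : ((j * (n-j) : ℕ) : ℝ) ≤ (((j+1) * (n-j+1) : ℕ) : ℝ) := by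
      exact_mod_cast Nat.mul_le_mul (by omega) (by omega)
    have h2 : (((j+1) * (n-j+1) : ℕ) : ℝ) * (Esym n lam (j-1) * Esym n lam (j+1)) ≤
        (((j+1) * (n-j+1) : ℕ) : ℝ) * Esym n lam j ^ 2 :=
      h1.trans (mul_le_mul_of_nonneg_right c1 (sq_nonneg _))
    exact le_of_mul_le_mul_left h2 c2

end NewtonIneq

theorem sigma_k_mul_sigma_km1_ge_sigma_km2_mul_sigma_kp1
    (n : ℕ) (hn : 3 ≤ n) (k : ℕ) (hk1 : 2 ≤ k) (hk : k ≤ n - 1)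
    (lam : Fin n → ℝ) (hlam : lam ∈ Gamma n k) :
    esymmZ n k lam * esymmZ n ((k : ℤ) - 1) lam ≥
      esymmZ n ((k : ℤ) - 2) lam * esymmZ n ((k : ℤ) + 1) lam := by
  have e1 : ((k : ℤ) - 1) = ((k - 1 : ℕ) : ℤ) := by omega
  have e2 : ((k : ℤ) - 2) = ((k - 2 : ℕ) : ℤ) := by omega
  have e3 : ((k : ℤ) + 1) = ((k + 1 : ℕ) : ℤ) := by omega
  rw [e1, e2, e3, esymmZ_natCast, esymmZ_natCast, esymmZ_natCast, esymmZ_natCast]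
  have hB : 0 < Esym n lam k := by
    have := hlam k (by omega) le_rfl
    rwa [esymmZ_natCast] at this
  have hC : 0 < Esym n lam (k-1) := by
    have := hlam (k-1) (by omega) (by omega)
    rwa [esymmZ_natCast] at this
  have hD : 0 < Esym n lam (k-2) := by
    rcases eq_or_lt_of_le hk1 with h | h
    · rw [show k - 2 = 0 from by omega, Esym_zero]; norm_num
    · have := hlam (k-2) (by omega) (by omega)
      rwa [esymmZ_natCast] at this
  have hN1 : Esym n lam (k-1) * Esym n lam (k+1) ≤ Esym n lam k ^ 2 :=
    newton_weak n k (by omega) (by omega) lam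
  have hN2 : Esym n lam (k-2) * Esym n lam k ≤ Esym n lam (k-1) ^ 2 := by
    have h := newton_weak n (k-1) (by omega) (by omega) lam
    rwa [show k-1-1 = k-2 from by omega, show k-1+1 = k from by omega] at h
  rcases le_or_gt (Esym n lam (k+1)) 0 with hA | hA
  · nlinarith [mul_pos hB hC]
  · have key : (Esym n lam (k-2) * Esym n lam k) * (Esym n lam (k-1) * Esym n lam (k+1)) ≤
        Esym n lam (k-1) ^ 2 * Esym n lam k ^ 2 :=
      mul_le_mul hN2 hN1 (by positivity) (by positivity)
    nlinarith [key, mul_pos hB hC, mul_pos hD hA]
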